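/- Let y_* ∈ ℝ, r > 0, 𝔠₀ > 0, and let W : ℝ → ℝ be continuous with |W(y)|² ≥ 𝔠₀^{-1}(y − y_*)² for all y in the ball B_r(y_*). Then for every ε > 0 and every f ∈ H¹(ℝ; ℂ) supported in B_r(y_*): ε^{1/2} ∫_ℝ |f(y)|² dy ≤ (1/2) ε ‖∂_y f‖_{L²(ℝ)}² + 2𝔠₀ ‖W f‖_{L²(ℝ)}². -/

import Mathlib

open MeasureTheory Complex Set

theorem local_spectral_inequality
    (ys r c0 : ℝ) (hr : 0 < r) (hc0 : 0 < c0)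
    (W : ℝ → ℝ) (hW : Continuous W)
    (hlow : ∀ y ∈ Metric.ball ys r, c0⁻¹ * (y - ys) ^ 2 ≤ (W y) ^ 2)
    (ε : ℝ) (hε : 0 < ε)
    (f : ℝ → ℂ) (hfd : Differentiable ℝ f)
    (hf2 : MemLp f 2 volume) (hdf2 : MemLp (deriv f) 2 volume)
    (hsupp : Function.support f ⊆ Metric.ball ys r) :
    ε ^ ((1:ℝ)/2) * (∫ y : ℝ, ‖f y‖ ^ 2)
      ≤ (1/2) * ε * (∫ y : ℝ, ‖deriv f y‖ ^ 2)
        + 2 * c0 * (∫ y : ℝ, (W y) ^ 2 * ‖f y‖ ^ 2) := by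
  have hfc : Continuous f := hfd.continuous
  have hfz : ∀ y, r ≤ |y - ys| → f y = 0 := by
    intro y hy
    by_contra h
    have := hsupp h
    rw [Metric.mem_ball, Real.dist_eq] at this
    linarith
  set D : ℝ → ℝ := fun y =>
      2 * ((f y).re * (deriv f y).re + (f y).im * (deriv f y).im) with hDdef
  have hnorm : ∀ z : ℂ, ‖z‖ ^ 2 = z.re ^ 2 + z.im ^ 2 := by
    intro z; rw [Complex.sq_norm, Complex.normSq_apply]; ring
  -- derivative of |f|^2
  have key : ∀ y, HasDerivAt (fun y => ‖f y‖ ^ 2) (D y) y := by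
    intro y
    have hre : HasDerivAt (fun y => (f y).re) ((deriv f y).re) y :=
      Complex.reCLM.hasFDerivAt.comp_hasDerivAt y (hfd y).hasDerivAt
    have him : HasDerivAt (fun y => (f y).im) ((deriv f y).im) y :=
      Complex.imCLM.hasFDerivAt.comp_hasDerivAt y (hfd y).hasDerivAt
    have h := (hre.mul hre).add (him.mul him)
    have e1 : (fun y => (f y).re * (f y).re + (f y).im * (f y).im)
        = fun y => ‖f y‖ ^ 2 := by
      funext z; rw [hnorm (f z)]; ring
    rw [show (((fun y => (f y).re) * fun y => (f y).re) + (fun y => (f y).im) * fun y => (f y).im) = fun y => ‖f y‖ ^ 2 from e1] at h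
    refine h.congr_deriv ?_
    rw [hDdef]; ring
  have hg : ∀ y, HasDerivAt (fun y => (y - ys) * ‖f y‖ ^ 2)
      (‖f y‖ ^ 2 + (y - ys) * D y) y := by
    intro y
    have := ((hasDerivAt_id y).sub_const ys).mul (key y)
    simp at this; exact this
  -- compact support facts
  have hcs : HasCompactSupport f := by
    apply HasCompactSupport.intro (isCompact_closedBall ys r)
    intro y hy
    apply hfz
    rw [Metric.mem_closedBall, Real.dist_eq, not_le] at hy
    exact hy.le
  have hφc : Continuous (fun y => ‖f y‖ ^ 2) := (hfc.norm.pow 2)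
  have hφcs : HasCompactSupport (fun y => ‖f y‖ ^ 2) :=
    hcs.comp_left (g := fun z => ‖z‖ ^ 2) (by simp)
  -- integrability
  have hI1 : Integrable (fun y => ‖f y‖ ^ 2) :=
    hφc.integrable_of_hasCompactSupport hφcs
  have hI2 : Integrable (fun y => ‖deriv f y‖ ^ 2) := by
    have h := hdf2.integrable_norm_rpow (by norm_num) (by norm_num)
    simpa [ENNReal.toReal_ofNat, Real.rpow_natCast] using h
  have hIW : Integrable (fun y => W y ^ 2 * ‖f y‖ ^ 2) := by
    apply Continuous.integrable_of_hasCompactSupport ((hW.pow 2).mul hφc)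
    apply HasCompactSupport.intro (isCompact_closedBall ys r)
    intro y hy
    rw [Metric.mem_closedBall, Real.dist_eq, not_le] at hy
    simp [hfz y hy.le]
  have hmD : Measurable D := by
    apply Measurable.const_mul
    exact ((Complex.measurable_re.comp hfc.measurable).mul
        (Complex.measurable_re.comp (measurable_deriv f))).add
      ((Complex.measurable_im.comp hfc.measurable).mul
        (Complex.measurable_im.comp (measurable_deriv f)))
  have hIG : Integrable (fun y => (y - ys) * D y) := by
    apply Integrable.mono ((hI1.add hI2).const_mul r)
      (((measurable_id.sub_const ys).mul hmD).aestronglyMeasurable)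
    filter_upwards with y
    simp only [Pi.add_apply, Pi.mul_apply, Real.norm_eq_abs, id_eq]
    rw [_root_.abs_of_nonneg (show (0:ℝ) ≤ r * (‖f y‖ ^ 2 + ‖deriv f y‖ ^ 2) by positivity),
      abs_mul]
    rcases eq_or_ne (f y) 0 with h0 | h0
    · have hD0 : D y = 0 := by simp only [hDdef]; simp [h0]
      rw [hD0, abs_zero, mul_zero]
      positivity
    · have hyr : |y - ys| ≤ r := by
        by_contra h
        exact h0 (hfz y (le_of_lt (not_le.mp h)))
      have h1 : |D y| ≤ ‖f y‖ ^ 2 + ‖deriv f y‖ ^ 2 := by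
        rw [abs_le, hnorm (f y), hnorm (deriv f y)]
        simp only [hDdef]
        constructor <;>
          nlinarith [sq_nonneg ((f y).re + (deriv f y).re),
            sq_nonneg ((f y).im + (deriv f y).im),
            sq_nonneg ((f y).re - (deriv f y).re),
            sq_nonneg ((f y).im - (deriv f y).im)]
      exact mul_le_mul hyr h1 (abs_nonneg _) hr.le
  -- integration by parts : ∫ G = 0
  set a := ys - (r + 1) with ha
  set b := ys + (r + 1) with hb
  have hab : a ≤ b := by rw [ha, hb]; linarith
  have hIoc : ∀ y, y ∉ Ioc a b → (‖f y‖ ^ 2 + (y - ys) * D y) = 0 := by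
    intro y hy
    rw [mem_Ioc, not_and_or, not_lt, not_le] at hy
    have h0 : f y = 0 := by
      apply hfz
      rcases hy with h | h
      · refine le_abs.mpr (Or.inr ?_)
        rw [ha] at h; linarith
      · refine le_abs.mpr (Or.inl ?_)
        rw [hb] at h; linarith
    rw [hDdef]; simp [h0]
  have hGint : Integrable (fun y => ‖f y‖ ^ 2 + (y - ys) * D y) := hI1.add hIG
  have hfa : f a = 0 := by
    apply hfz
    rw [ha, show ys - (r + 1) - ys = -(r + 1) by ring, abs_neg,
      abs_of_pos (by linarith)]
    linarith
  have hfb : f b = 0 := by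
    apply hfz
    rw [hb, show ys + (r + 1) - ys = r + 1 by ring, abs_of_pos (by linarith)]
    linarith
  have hzero : ∫ y, (‖f y‖ ^ 2 + (y - ys) * D y) = 0 := by
    rw [← setIntegral_eq_integral_of_forall_compl_eq_zero hIoc,
      ← intervalIntegral.integral_of_le hab,
      intervalIntegral.integral_eq_sub_of_hasDerivAt (fun y _ => hg y)
        hGint.intervalIntegrable]
    simp [hfa, hfb]
  have hAB : ∫ y : ℝ, ‖f y‖ ^ 2 = ∫ y, -((y - ys) * D y) := by
    have hadd := integral_add hI1 hIG
    rw [hzero] at hadd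
    rw [integral_neg]
    linarith
  -- pointwise Young + lower bound
  set s := ε ^ ((1:ℝ)/2) with hsdef
  have hs : s ^ 2 = ε := by
    rw [hsdef, ← Real.rpow_natCast (ε ^ ((1:ℝ)/2)) 2, ← Real.rpow_mul hε.le]
    norm_num
  have hs0 : 0 < s := Real.rpow_pos_of_pos hε _
  have hpt : ∀ y, s * -((y - ys) * D y)
      ≤ (1/2) * ε * ‖deriv f y‖ ^ 2 + 2 * c0 * (W y ^ 2 * ‖f y‖ ^ 2) := by
    intro y
    rcases eq_or_ne (f y) 0 with h0 | h0
    · have hD0 : D y = 0 := by simp only [hDdef]; simp [h0]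
      rw [hD0, h0]
      simp only [mul_zero, neg_zero, norm_zero]
      positivity
    · have hyb : y ∈ Metric.ball ys r := hsupp h0
      have hW2 : c0⁻¹ * (y - ys) ^ 2 ≤ W y ^ 2 := hlow y hyb
      have hW2' : (y - ys) ^ 2 ≤ c0 * W y ^ 2 := by
        have := mul_le_mul_of_nonneg_left hW2 hc0.le
        rwa [mul_inv_cancel_left₀ hc0.ne'] at this
      have hprod : (y - ys) ^ 2 * ((f y).re ^ 2 + (f y).im ^ 2)
          ≤ c0 * W y ^ 2 * ((f y).re ^ 2 + (f y).im ^ 2) :=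
        mul_le_mul_of_nonneg_right hW2' (by positivity)
      rw [← hs, hnorm (f y), hnorm (deriv f y)]
      simp only [hDdef]
      nlinarith [sq_nonneg (s * (deriv f y).re + 2 * (y - ys) * (f y).re),
        sq_nonneg (s * (deriv f y).im + 2 * (y - ys) * (f y).im), hprod]
  have hmain : ∫ y, s * -((y - ys) * D y)
      ≤ ∫ y, ((1/2) * ε * ‖deriv f y‖ ^ 2 + 2 * c0 * (W y ^ 2 * ‖f y‖ ^ 2)) :=
    integral_mono (hIG.neg.const_mul _)
      ((hI2.const_mul _).add (hIW.const_mul _)) hpt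
  calc s * (∫ y : ℝ, ‖f y‖ ^ 2)
      = ∫ y, s * -((y - ys) * D y) := by
        rw [hAB, integral_const_mul]
    _ ≤ ∫ y, ((1/2) * ε * ‖deriv f y‖ ^ 2 + 2 * c0 * (W y ^ 2 * ‖f y‖ ^ 2)) := hmain
    _ = (1/2) * ε * (∫ y : ℝ, ‖deriv f y‖ ^ 2)
        + 2 * c0 * (∫ y : ℝ, (W y) ^ 2 * ‖f y‖ ^ 2) := by
        rw [integral_add (hI2.const_mul _) (hIW.const_mul _),
          integral_const_mul, integral_const_mul]
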